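/- Let ω₁, ..., ωₙ be points in the closed upper half-plane. For any λ₁, ..., λₙ ≥ 0 with Σλᵢ = 1, the zero of the positive definite quadratic Σᵢ λᵢ Q_{ωᵢ} lies in the hyperbolic convex hull of {ω₁, ..., ωₙ}. -/

import Mathlib

/-- `p` lies on the hyperbolic geodesic segment joining `z` and `w` in the closed
upper half-plane. -/
def OnHypSeg (z w p : ℂ) : Prop :=
  0 ≤ p.im ∧
  ((z.re = w.re ∧ p.re = z.re ∧ p.im ∈ Set.uIcc z.im w.im) ∨
    (∃ c r : ℝ, ‖z - c‖ = r ∧ ‖w - c‖ = r ∧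
      ‖p - c‖ = r ∧ p.re ∈ Set.uIcc z.re w.re))

/-- A subset of the closed upper half-plane is hyperbolically convex if it contains
the geodesic segment between any two of its points. -/
def HypConvex (S : Set ℂ) : Prop :=
  (∀ p ∈ S, 0 ≤ p.im) ∧ ∀ z ∈ S, ∀ w ∈ S, ∀ p : ℂ, OnHypSeg z w p → p ∈ S

/-- The hyperbolic convex hull: the intersection of all hyperbolically convex sets
containing `A`. -/
def hypConvexHull (A : Set ℂ) : Set ℂ :=
  ⋂₀ {S : Set ℂ | HypConvex S ∧ A ⊆ S}

lemma upperHalf_hypConvex : HypConvex {z : ℂ | 0 ≤ z.im} :=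
  ⟨fun _ hp => hp, fun _ _ _ _ _ hp => hp.1⟩

lemma subset_hypConvexHull (A : Set ℂ) : A ⊆ hypConvexHull A := by
  intro x hx S hS; exact hS.2 hx

lemma hypConvexHull_mono {A B : Set ℂ} (h : A ⊆ B) : hypConvexHull A ⊆ hypConvexHull B := by
  intro x hx S hS
  exact hx S ⟨hS.1, h.trans hS.2⟩

lemma hypConvex_hull {A : Set ℂ} (hA : ∀ a ∈ A, 0 ≤ a.im) : HypConvex (hypConvexHull A) := by
  constructor
  · intro p hp
    exact hp {z | 0 ≤ z.im} ⟨upperHalf_hypConvex, hA⟩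
  · intro z hz w hw p hp S hS
    exact hS.1.2 z (hz S hS) w (hw S hS) p hp

lemma nsq (u : ℂ) (c : ℝ) :
    Complex.normSq (u - (c : ℂ)) = ‖u‖ ^ 2 - 2 * c * u.re + c ^ 2 := by
  rw [Complex.sq_norm, Complex.normSq_apply, Complex.normSq_apply]
  simp [Complex.sub_re, Complex.sub_im]
  ring

lemma pt_re (p s : ℝ) : (((p : ℝ) : ℂ) + ((s : ℝ) : ℂ) * Complex.I).re = p := by simp

lemma pt_im (p s : ℝ) : (((p : ℝ) : ℂ) + ((s : ℝ) : ℂ) * Complex.I).im = s := by simp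

lemma pt_abs_sq (p s : ℝ) :
    ‖((p : ℝ) : ℂ) + ((s : ℝ) : ℂ) * Complex.I‖ ^ 2 = p ^ 2 + s ^ 2 := by
  rw [Complex.sq_norm, Complex.normSq_apply, pt_re, pt_im]
  ring

lemma sqrt_comb_mem_uIcc (a b l : ℝ) (ha : 0 ≤ a) (hb : 0 ≤ b) (h0 : 0 ≤ l) (h1 : l ≤ 1) :
    Real.sqrt (l * a ^ 2 + (1 - l) * b ^ 2) ∈ Set.uIcc a b := by
  rcases le_total a b with h | h
  · rw [Set.uIcc_of_le h, Set.mem_Icc]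
    have hab : a ^ 2 ≤ b ^ 2 := by nlinarith
    constructor
    · have h2 : a ^ 2 ≤ l * a ^ 2 + (1 - l) * b ^ 2 := by
        nlinarith [mul_nonneg (by linarith : (0:ℝ) ≤ 1 - l) (by linarith : (0:ℝ) ≤ b ^ 2 - a ^ 2)]
      calc a = Real.sqrt (a ^ 2) := (Real.sqrt_sq ha).symm
        _ ≤ _ := Real.sqrt_le_sqrt h2
    · have h2 : l * a ^ 2 + (1 - l) * b ^ 2 ≤ b ^ 2 := by
        nlinarith [mul_nonneg h0 (by linarith : (0:ℝ) ≤ b ^ 2 - a ^ 2)]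
      calc Real.sqrt (l * a ^ 2 + (1 - l) * b ^ 2) ≤ Real.sqrt (b ^ 2) := Real.sqrt_le_sqrt h2
        _ = b := Real.sqrt_sq hb
  · rw [Set.uIcc_of_ge h, Set.mem_Icc]
    have hab : b ^ 2 ≤ a ^ 2 := by nlinarith
    constructor
    · have h2 : b ^ 2 ≤ l * a ^ 2 + (1 - l) * b ^ 2 := by
        nlinarith [mul_nonneg h0 (by linarith : (0:ℝ) ≤ a ^ 2 - b ^ 2)]
      calc b = Real.sqrt (b ^ 2) := (Real.sqrt_sq hb).symm
        _ ≤ _ := Real.sqrt_le_sqrt h2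
    · have h2 : l * a ^ 2 + (1 - l) * b ^ 2 ≤ a ^ 2 := by
        nlinarith [mul_nonneg (by linarith : (0:ℝ) ≤ 1 - l) (by linarith : (0:ℝ) ≤ a ^ 2 - b ^ 2)]
      calc Real.sqrt (l * a ^ 2 + (1 - l) * b ^ 2) ≤ Real.sqrt (a ^ 2) := Real.sqrt_le_sqrt h2
        _ = a := Real.sqrt_sq ha

lemma onHypSeg_comb (z w : ℂ) (hz : 0 ≤ z.im) (hw : 0 ≤ w.im) (l p q : ℝ)
    (h0 : 0 ≤ l) (h1 : l ≤ 1)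
    (hpeq : p = l * z.re + (1 - l) * w.re)
    (hqeq : q = l * ‖z‖ ^ 2 + (1 - l) * ‖w‖ ^ 2)
    (hpd : p ^ 2 < q) :
    OnHypSeg z w (((p : ℝ) : ℂ) + ((Real.sqrt (q - p ^ 2) : ℝ) : ℂ) * Complex.I) := by
  have hd : 0 ≤ q - p ^ 2 := by linarith
  have hqz : ‖z‖ ^ 2 = z.re ^ 2 + z.im ^ 2 := by
    rw [Complex.sq_norm, Complex.normSq_apply]; ring
  have hqw : ‖w‖ ^ 2 = w.re ^ 2 + w.im ^ 2 := by
    rw [Complex.sq_norm, Complex.normSq_apply]; ring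
  refine ⟨by rw [pt_im]; exact Real.sqrt_nonneg _, ?_⟩
  by_cases hre : z.re = w.re
  · left
    have hpz : p = z.re := by rw [hpeq, ← hre]; ring
    have key : q - p ^ 2 = l * z.im ^ 2 + (1 - l) * w.im ^ 2 := by
      rw [hqeq, hpz, hqz, hqw, ← hre]; ring
    refine ⟨hre, by rw [pt_re]; exact hpz, ?_⟩
    rw [pt_im, key]
    exact sqrt_comb_mem_uIcc z.im w.im l hz hw h0 h1
  · right
    have hne : z.re - w.re ≠ 0 := sub_ne_zero.mpr hre
    have hne2 : (2 : ℝ) * (z.re - w.re) ≠ 0 := mul_ne_zero two_ne_zero hne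
    obtain ⟨c, hcq⟩ : ∃ c : ℝ,
        2 * c * (z.re - w.re) = ‖z‖ ^ 2 - ‖w‖ ^ 2 :=
      ⟨(‖z‖ ^ 2 - ‖w‖ ^ 2) / (2 * (z.re - w.re)), by field_simp⟩
    have hkey : ‖w‖ ^ 2 - 2 * c * w.re = ‖z‖ ^ 2 - 2 * c * z.re := by
      linear_combination hcq
    refine ⟨c, ‖z - (c : ℂ)‖, rfl, ?_, ?_, ?_⟩
    · rw [Complex.norm_def, Complex.norm_def]
      congr 1
      rw [nsq, nsq]
      linarith [hkey]
    · rw [Complex.norm_def, Complex.norm_def]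
      congr 1
      rw [nsq, nsq, pt_abs_sq, Real.sq_sqrt hd, pt_re, hqeq, hpeq]
      linear_combination (1 - l) * hkey
    · rw [pt_re, hpeq]
      rcases le_total z.re w.re with h | h
      · rw [Set.uIcc_of_le h, Set.mem_Icc]
        constructor <;>
          nlinarith [mul_nonneg (by linarith : (0:ℝ) ≤ 1 - l)
              (by linarith : (0:ℝ) ≤ w.re - z.re),
            mul_nonneg h0 (by linarith : (0:ℝ) ≤ w.re - z.re)]
      · rw [Set.uIcc_of_ge h, Set.mem_Icc]
        constructor <;>
          nlinarith [mul_nonneg (by linarith : (0:ℝ) ≤ 1 - l)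
              (by linarith : (0:ℝ) ≤ z.re - w.re),
            mul_nonneg h0 (by linarith : (0:ℝ) ≤ z.re - w.re)]

theorem main_ind : ∀ (n : ℕ) (ω : Fin n → ℂ), (∀ i, 0 ≤ (ω i).im) →
    ∀ (l : Fin n → ℝ), (∀ i, 0 ≤ l i) → (∑ i, l i) = 1 →
    (∑ i, l i * (ω i).re) ^ 2 < ∑ i, l i * ‖ω i‖ ^ 2 →
    (((∑ i, l i * (ω i).re : ℝ) : ℂ) +
      ((Real.sqrt ((∑ i, l i * ‖ω i‖ ^ 2) - (∑ i, l i * (ω i).re) ^ 2) : ℝ) : ℂ)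
        * Complex.I)
      ∈ hypConvexHull (Set.range ω) := by
  intro n
  induction n with
  | zero =>
    intro ω _ l _ hsum _
    simp at hsum
  | succ n ih =>
    intro ω hω l hl hsum hpd
    have hA : ∀ a ∈ Set.range ω, 0 ≤ a.im := by rintro a ⟨i, rfl⟩; exact hω i
    obtain ⟨zn, hzn⟩ : ∃ x : ℂ, ω (Fin.last n) = x := ⟨_, rfl⟩
    obtain ⟨lam, hlam⟩ : ∃ x : ℝ, l (Fin.last n) = x := ⟨_, rfl⟩
    obtain ⟨s, hs⟩ : ∃ x : ℝ, ∑ i : Fin n, l i.castSucc = x := ⟨_, rfl⟩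
    obtain ⟨Sp, hSp⟩ : ∃ x : ℝ, ∑ i : Fin n, l i.castSucc * (ω i.castSucc).re = x := ⟨_, rfl⟩
    obtain ⟨Sq, hSq⟩ : ∃ x : ℝ,
        ∑ i : Fin n, l i.castSucc * ‖ω i.castSucc‖ ^ 2 = x := ⟨_, rfl⟩
    have hsum2 : s + lam = 1 := by rw [← hs, ← hlam, ← Fin.sum_univ_castSucc]; exact hsum
    have hpsplit : (∑ i, l i * (ω i).re) = Sp + lam * zn.re := by
      rw [Fin.sum_univ_castSucc, hSp, hlam, hzn]
    have hqsplit : (∑ i, l i * ‖ω i‖ ^ 2) = Sq + lam * ‖zn‖ ^ 2 := by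
      rw [Fin.sum_univ_castSucc, hSq, hlam, hzn]
    have hs0 : 0 ≤ s := by rw [← hs]; exact Finset.sum_nonneg fun i _ => hl _
    by_cases hse : s = 0
    · -- all weights except the last vanish
      have hz0 : ∀ i : Fin n, l i.castSucc = 0 := by
        intro i
        have h0 : ∑ i : Fin n, l i.castSucc = 0 := by rw [hs, hse]
        exact (Finset.sum_eq_zero_iff_of_nonneg (fun i _ => hl _)).mp h0 i (Finset.mem_univ i)
      have hlam1 : lam = 1 := by rw [hse] at hsum2; linarith
      have hSp0 : Sp = 0 := by
        rw [← hSp]; exact Finset.sum_eq_zero fun i _ => by rw [hz0 i]; ring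
      have hSq0 : Sq = 0 := by
        rw [← hSq]; exact Finset.sum_eq_zero fun i _ => by rw [hz0 i]; ring
      have hp1 : (∑ i, l i * (ω i).re) = zn.re := by rw [hpsplit, hSp0, hlam1]; ring
      have hq1 : (∑ i, l i * ‖ω i‖ ^ 2) = ‖zn‖ ^ 2 := by
        rw [hqsplit, hSq0, hlam1]; ring
      rw [hp1, hq1]
      have him : ‖zn‖ ^ 2 - zn.re ^ 2 = zn.im ^ 2 := by
        rw [Complex.sq_norm, Complex.normSq_apply]; ring
      rw [him, Real.sqrt_sq (by rw [← hzn]; exact hω _)]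
      have hzz : ((zn.re : ℝ) : ℂ) + ((zn.im : ℝ) : ℂ) * Complex.I = zn := by
        apply Complex.ext
        · rw [pt_re]
        · rw [pt_im]
      rw [hzz, ← hzn]
      exact subset_hypConvexHull _ ⟨Fin.last n, rfl⟩
    · have hspos : 0 < s := lt_of_le_of_ne hs0 (Ne.symm hse)
      obtain ⟨p1, hp1⟩ : ∃ x : ℝ, x = Sp / s := ⟨_, rfl⟩
      obtain ⟨q1, hq1⟩ : ∃ x : ℝ, x = Sq / s := ⟨_, rfl⟩
      -- produce a point z' in the hull with re = p1, |z'|^2 = q1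
      obtain ⟨z', hz'im, hz're, hz'abs, hz'mem⟩ :
          ∃ z' : ℂ, 0 ≤ z'.im ∧ z'.re = p1 ∧ ‖z'‖ ^ 2 = q1 ∧
            z' ∈ hypConvexHull (Set.range ω) := by
        have key : ∑ i : Fin n, l i.castSucc * Complex.normSq (ω i.castSucc - (p1 : ℂ))
            = Sq - 2 * p1 * Sp + p1 ^ 2 * s := by
          rw [← hSq, ← hSp, ← hs, Finset.mul_sum, Finset.mul_sum,
            ← Finset.sum_sub_distrib, ← Finset.sum_add_distrib]
          exact Finset.sum_congr rfl fun i _ => by rw [nsq]; ring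
        have keynn : 0 ≤ ∑ i : Fin n, l i.castSucc * Complex.normSq (ω i.castSucc - (p1 : ℂ)) :=
          Finset.sum_nonneg fun i _ => mul_nonneg (hl _) (Complex.normSq_nonneg _)
        have hdiff : Sq - 2 * p1 * Sp + p1 ^ 2 * s = s * (q1 - p1 ^ 2) := by
          rw [hp1, hq1]; field_simp; ring
        have hnn : 0 ≤ s * (q1 - p1 ^ 2) := by
          rw [← hdiff, ← key]; exact keynn
        have hCS : p1 ^ 2 ≤ q1 := by nlinarith [hnn, hspos]
        by_cases hlt : p1 ^ 2 < q1
        · -- use the inductive hypothesis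
          have hsum'' : (∑ i : Fin n, l i.castSucc / s) = 1 := by
            rw [← Finset.sum_div, hs]; exact div_self hse
          have hSp' : (∑ i : Fin n, (l i.castSucc / s) * (ω i.castSucc).re) = p1 := by
            rw [hp1, ← hSp, Finset.sum_div]
            exact Finset.sum_congr rfl fun i _ => by ring
          have hSq' : (∑ i : Fin n, (l i.castSucc / s) * ‖ω i.castSucc‖ ^ 2)
              = q1 := by
            rw [hq1, ← hSq, Finset.sum_div]
            exact Finset.sum_congr rfl fun i _ => by ring
          have hpd' : (∑ i : Fin n, (l i.castSucc / s) * ((fun i => ω i.castSucc) i).re) ^ 2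
              < ∑ i : Fin n, (l i.castSucc / s) *
                  ‖(fun i => ω i.castSucc) i‖ ^ 2 := by
            simpa only [] using (by rw [hSp', hSq']; exact hlt :
              (∑ i : Fin n, (l i.castSucc / s) * (ω i.castSucc).re) ^ 2
                < ∑ i : Fin n, (l i.castSucc / s) * ‖ω i.castSucc‖ ^ 2)
          have hmem := ih (fun i => ω i.castSucc) (fun i => hω _)
            (fun i => l i.castSucc / s) (fun i => div_nonneg (hl _) hs0) hsum'' hpd'
          rw [hSp', hSq'] at hmem
          refine ⟨((p1 : ℝ) : ℂ) + ((Real.sqrt (q1 - p1 ^ 2) : ℝ) : ℂ) * Complex.I,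
            ?_, ?_, ?_, ?_⟩
          · rw [pt_im]; exact Real.sqrt_nonneg _
          · rw [pt_re]
          · rw [pt_abs_sq, Real.sq_sqrt (by linarith)]; ring
          · refine hypConvexHull_mono ?_ hmem
            rintro a ⟨i, rfl⟩; exact ⟨i.castSucc, rfl⟩
        · -- degenerate case: all mass at the real point p1
          have hq1p1 : q1 = p1 ^ 2 := le_antisymm (not_lt.mp hlt) hCS
          have hzero : ∑ i : Fin n, l i.castSucc * Complex.normSq (ω i.castSucc - (p1 : ℂ))
              = 0 := by rw [key, hdiff, hq1p1]; ring
          obtain ⟨i0, hi0⟩ : ∃ i : Fin n, l i.castSucc ≠ 0 := by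
            by_contra h
            push_neg at h
            exact hse (by rw [← hs]; exact Finset.sum_eq_zero fun i _ => h i)
          have hterm : l i0.castSucc * Complex.normSq (ω i0.castSucc - (p1 : ℂ)) = 0 :=
            (Finset.sum_eq_zero_iff_of_nonneg
              (fun i _ => mul_nonneg (hl _) (Complex.normSq_nonneg _))).mp hzero i0
              (Finset.mem_univ i0)
          have hω0 : ω i0.castSucc = (p1 : ℂ) := by
            rcases mul_eq_zero.mp hterm with h | h
            · exact absurd h hi0
            · exact sub_eq_zero.mp (Complex.normSq_eq_zero.mp h)
          refine ⟨ω i0.castSucc, by rw [hω0]; simp, by rw [hω0]; simp, ?_, ?_⟩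
          · rw [hω0, hq1p1, Complex.sq_norm, Complex.normSq_ofReal]; ring
          · exact subset_hypConvexHull _ ⟨i0.castSucc, rfl⟩
      -- now combine zn and z'
      have hlamnn : 0 ≤ lam := by rw [← hlam]; exact hl _
      have hlamle : lam ≤ 1 := by linarith
      have h1lam : 1 - lam = s := by linarith
      have hpsum : (∑ i, l i * (ω i).re) = lam * zn.re + (1 - lam) * z'.re := by
        rw [hpsplit, hz're, h1lam, hp1]
        field_simp
        ring
      have hqsum : (∑ i, l i * ‖ω i‖ ^ 2)
          = lam * ‖zn‖ ^ 2 + (1 - lam) * ‖z'‖ ^ 2 := by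
        rw [hqsplit, hz'abs, h1lam, hq1]
        field_simp
        ring
      rw [hpsum, hqsum] at hpd ⊢
      have hznim : 0 ≤ zn.im := by rw [← hzn]; exact hω _
      have hseg := onHypSeg_comb zn z' hznim hz'im lam _ _ hlamnn hlamle rfl rfl hpd
      have hznmem : zn ∈ hypConvexHull (Set.range ω) := by
        rw [← hzn]; exact subset_hypConvexHull _ ⟨Fin.last n, rfl⟩
      exact (hypConvex_hull hA).2 zn hznmem z' hz'mem _ hseg

/-- For points `ω₁, …, ωₙ` in the closed upper half-plane and weights `λᵢ ≥ 0`
summing to 1, the zero of the positive definite quadratic `Σ λᵢ Q_{ωᵢ}`, namely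
`p + i√(q - p²)` with `p = Σ λᵢ Re ωᵢ`, `q = Σ λᵢ |ωᵢ|²`, lies in the hyperbolic
convex hull of `{ω₁, …, ωₙ}`. -/
theorem zero_of_comb_mem_convexHull (n : ℕ) (ω : Fin n → ℂ)
    (hω : ∀ i, 0 ≤ (ω i).im) (l : Fin n → ℝ) (hl : ∀ i, 0 ≤ l i)
    (hsum : ∑ i, l i = 1)
    (hpd : (∑ i, l i * (ω i).re) ^ 2 < ∑ i, l i * ‖ω i‖ ^ 2) :
    let p := ∑ i, l i * (ω i).re
    let q := ∑ i, l i * ‖ω i‖ ^ 2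
    ((p : ℂ) + (Real.sqrt (q - p ^ 2) : ℝ) * Complex.I)
      ∈ hypConvexHull (Set.range ω) := by
  intro p q
  exact main_ind n ω hω l hl hsum hpd
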